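/- Let R ∈ ℕ and S = (x_1,...,x_M) be a finite sequence taking values only in {k/R : k = 0,1,...,R-1}. Suppose |{n : x_n = k/R}| = α_k·M + ε_k where α_k ≥ 0, α_1 = α_2 = ... = α_{R-1}, and Σ_{k=0}^{R-1} α_k = 1. Then M·D*(S) ≤ max{α_0·M, M/R} + Σ_{k=0}^{R-1} |ε_k|, where D*(S) = sup_{r>0} | |{n : x_n ∈ [0,r]}|/M − r | is the star discrepancy. -/

import Mathlib

open scoped Classical in
/-- Star discrepancy of a finite sequence `x : Fin M → ℝ`. -/
noncomputable def starDisc (M : ℕ) (x : Fin M → ℝ) : ℝ :=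
  ⨆ r : Set.Ioc (0 : ℝ) 1,
    |((Finset.univ.filter fun n => x n ≤ (r : ℝ)).card : ℝ) / M - (r : ℝ)|

lemma key_ineq (a c r j Rr : ℝ) (ha : 0 ≤ a) (hc : 0 ≤ c) (hR : 1 ≤ Rr)
    (hsum : a + (Rr - 1) * c = 1) (hj0 : 0 ≤ j) (hjR : j ≤ Rr - 1)
    (h1 : j ≤ r * Rr) (h2 : r * Rr ≤ j + 1) :
    |a + j * c - r| ≤ max a (1 / Rr) := by
  have hRpos : (0:ℝ) < Rr := by linarith
  have hsumR : (a + (Rr - 1) * c) * Rr = 1 * Rr := by rw [hsum]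
  rw [abs_le]
  constructor
  · -- lower bound: -(max) ≤ a + j*c - r
    have hmain : (r - a - j * c) * Rr ≤ 1 := by
      rcases le_or_gt (c * Rr) 1 with h | h
      · nlinarith [mul_nonneg (by linarith : (0:ℝ) ≤ Rr - 1 - j) (by linarith : (0:ℝ) ≤ 1 - c * Rr),
          mul_nonneg ha hRpos.le]
      · nlinarith [mul_nonneg hj0 (by linarith : (0:ℝ) ≤ c * Rr - 1),
          mul_nonneg ha hRpos.le]
    have : r - a - j * c ≤ 1 / Rr := by
      rw [le_div_iff₀ hRpos]; linarith
    have hmax := le_max_right a (1 / Rr)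
    linarith
  · -- upper bound
    rcases le_or_gt (c * Rr) 1 with h | h
    · have : a + j * c - r ≤ a := by nlinarith [mul_nonneg hj0 (by linarith : (0:ℝ) ≤ 1 - c * Rr)]
      exact this.trans (le_max_left _ _)
    · have : (a + j * c - r) * Rr ≤ 1 := by
        nlinarith [mul_nonneg (by linarith : (0:ℝ) ≤ Rr - 1 - j) (by linarith : (0:ℝ) ≤ c * Rr - 1)]
      have : a + j * c - r ≤ 1 / Rr := by rw [le_div_iff₀ hRpos]; linarith
      exact this.trans (le_max_right _ _)

theorem stmt_4 (R M : ℕ) (hR : 0 < R) (x : Fin M → ℝ)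
    (hx : ∀ n, ∃ k < R, x n = (k : ℝ) / R)
    (α ε : ℕ → ℝ) (hα : ∀ k < R, 0 ≤ α k)
    (hαconst : ∀ k, 1 ≤ k → k < R → α k = α 1)
    (hsum : ∑ k ∈ Finset.range R, α k = 1)
    (hcount : ∀ k < R,
      ((Finset.univ.filter fun n => x n = (k : ℝ) / R).card : ℝ) = α k * M + ε k) :
    (M : ℝ) * starDisc M x ≤
      max (α 0 * M) ((M : ℝ) / R) + ∑ k ∈ Finset.range R, |ε k| := by
  classical
  have hRpos : (0:ℝ) < R := by exact_mod_cast hR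
  have hεnn : 0 ≤ ∑ k ∈ Finset.range R, |ε k| :=
    Finset.sum_nonneg fun _ _ => abs_nonneg _
  rcases Nat.eq_zero_or_pos M with hM | hM
  · subst hM
    simp only [Nat.cast_zero, zero_mul]
    have h1 : (0:ℝ) ≤ max (α 0 * 0) ((0 : ℝ) / R) :=
      le_max_of_le_right (by positivity)
    push_cast
    linarith
  have hMpos : (0:ℝ) < M := by exact_mod_cast hM
  set C := max (α 0 * M) ((M : ℝ) / R) + ∑ k ∈ Finset.range R, |ε k| with hCdef
  have hCnn : 0 ≤ C := by
    rw [hCdef]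
    exact add_nonneg (le_max_of_le_right (by positivity)) hεnn
  rw [mul_comm, ← le_div_iff₀ hMpos]
  apply Real.iSup_le _ (div_nonneg hCnn hMpos.le)
  rintro ⟨r, hr0, hr1⟩
  simp only
  -- setup j
  set j := min (Nat.floor (r * R)) (R - 1) with hjdef
  have hjR : j ≤ R - 1 := min_le_right _ _
  have hjRlt : j < R := by omega
  have hrRnn : (0:ℝ) ≤ r * R := by positivity
  have h1 : (j:ℝ) ≤ r * R := by
    have h1' : (j:ℝ) ≤ (Nat.floor (r * R) : ℝ) := by
      exact_mod_cast min_le_left _ _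
    exact h1'.trans (Nat.floor_le hrRnn)
  have h2 : r * R ≤ (j:ℝ) + 1 := by
    rcases le_or_gt (Nat.floor (r * R)) (R - 1) with h | h
    · have hj' : j = Nat.floor (r * R) := min_eq_left h
      rw [hj']
      exact_mod_cast (Nat.lt_floor_add_one (r * R)).le
    · have hj1 : j + 1 = R := by omega
      have : ((j:ℝ) + 1) = R := by exact_mod_cast congrArg (Nat.cast : ℕ → ℝ) hj1
      rw [this]
      nlinarith
  -- partition of the filter set
  have hset : Finset.univ.filter (fun n => x n ≤ r) =
      (Finset.range (j+1)).biUnion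
        (fun k => Finset.univ.filter (fun n => x n = (k:ℝ)/R)) := by
    ext n
    simp only [Finset.mem_filter, Finset.mem_biUnion, Finset.mem_range, Finset.mem_univ, true_and]
    constructor
    · intro hn
      obtain ⟨k, hkR, hxk⟩ := hx n
      refine ⟨k, ?_, hxk⟩
      rw [hxk, div_le_iff₀ hRpos] at hn
      have hk : k ≤ Nat.floor (r * R) := Nat.le_floor hn
      omega
    · rintro ⟨k, hk, hxk⟩
      rw [hxk, div_le_iff₀ hRpos]
      have : (k:ℝ) ≤ (j:ℝ) := by exact_mod_cast Nat.lt_succ_iff.mp hk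
      linarith
  have hdisj : ∀ k ∈ Finset.range (j+1), ∀ l ∈ Finset.range (j+1), k ≠ l →
      Disjoint (Finset.univ.filter (fun n => x n = (k:ℝ)/R))
        (Finset.univ.filter (fun n => x n = (l:ℝ)/R)) := by
    intro k _ l _ hkl
    rw [Finset.disjoint_left]
    intro n hn1 hn2
    simp only [Finset.mem_filter, Finset.mem_univ, true_and] at hn1 hn2
    have heq : (k:ℝ)/R = (l:ℝ)/R := by rw [← hn1, ← hn2]
    field_simp at heq
    exact hkl (by exact_mod_cast heq)
  have hcard : ((Finset.univ.filter fun n => x n ≤ r).card : ℝ)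
      = ∑ k ∈ Finset.range (j+1), ((Finset.univ.filter fun n => x n = (k:ℝ)/R).card : ℝ) := by
    rw [hset, Finset.card_biUnion hdisj]
    push_cast
    rfl
  -- sum of alphas
  have hαsum : ∑ k ∈ Finset.range (j+1), α k = α 0 + (j:ℝ) * α 1 := by
    rw [Finset.sum_range_succ']
    have hconst : ∀ i ∈ Finset.range j, α (i+1) = α 1 := by
      intro i hi
      have := Finset.mem_range.1 hi
      exact hαconst _ (by omega) (by omega)
    rw [Finset.sum_congr rfl hconst, Finset.sum_const, nsmul_eq_mul, Finset.card_range]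
    ring
  have hcount_total : ((Finset.univ.filter fun n => x n ≤ r).card : ℝ)
      = (α 0 + (j:ℝ) * α 1) * M + ∑ k ∈ Finset.range (j+1), ε k := by
    rw [hcard]
    have : ∀ k ∈ Finset.range (j+1),
        ((Finset.univ.filter fun n => x n = (k:ℝ)/R).card : ℝ) = α k * M + ε k := by
      intro k hk
      have := Finset.mem_range.1 hk
      exact hcount k (by omega)
    rw [Finset.sum_congr rfl this, Finset.sum_add_distrib, ← Finset.sum_mul, hαsum]
  -- the constant c
  set c : ℝ := if R = 1 then 0 else α 1 with hcdef
  have hc : 0 ≤ c := by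
    by_cases h : R = 1
    · simp [hcdef, h]
    · simp only [hcdef, if_neg h]
      exact hα 1 (by omega)
  have hjα : (j:ℝ) * α 1 = (j:ℝ) * c := by
    by_cases h : R = 1
    · have hj0 : j = 0 := by omega
      simp [hj0]
    · simp [hcdef, h]
  have hsum' : α 0 + ((R:ℝ) - 1) * c = 1 := by
    have hRsum : ∑ k ∈ Finset.range R, α k = α 0 + ((R:ℝ) - 1) * c := by
      obtain ⟨R', rfl⟩ : ∃ R', R = R' + 1 := ⟨R - 1, by omega⟩
      rw [Finset.sum_range_succ']
      by_cases h : R' = 0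
      · subst h; simp [hcdef]
      · have hconst : ∀ i ∈ Finset.range R', α (i+1) = α 1 := by
          intro i hi
          have := Finset.mem_range.1 hi
          exact hαconst _ (by omega) (by omega)
        rw [Finset.sum_congr rfl hconst, Finset.sum_const, nsmul_eq_mul, Finset.card_range]
        have : c = α 1 := by simp [hcdef]; omega
        rw [this]
        push_cast
        ring
    rw [← hRsum, hsum]
  have hjRcast : (j:ℝ) ≤ (R:ℝ) - 1 := by
    have hj1 : j + 1 ≤ R := by omega
    have : (j:ℝ) + 1 ≤ (R:ℝ) := by exact_mod_cast hj1
    linarith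
  have hkey := key_ineq (α 0) c r (j:ℝ) (R:ℝ) (hα 0 hR) hc (by exact_mod_cast hR)
    hsum' (by positivity) hjRcast h1 h2
  rw [← hjα] at hkey
  -- final assembly
  rw [le_div_iff₀ hMpos]
  have hrw : |((Finset.univ.filter fun n => x n ≤ r).card : ℝ) / M - r| * M
      = |((Finset.univ.filter fun n => x n ≤ r).card : ℝ) - r * M| := by
    rw [show |((Finset.univ.filter fun n => x n ≤ r).card : ℝ) / M - r| * (M:ℝ)
        = |(((Finset.univ.filter fun n => x n ≤ r).card : ℝ) / M - r) * M| from by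
      rw [abs_mul, abs_of_pos hMpos]]
    congr 1
    field_simp
  rw [hrw]
  have habs : |((Finset.univ.filter fun n => x n ≤ r).card : ℝ) - r * M|
      ≤ |α 0 + (j:ℝ) * α 1 - r| * M + ∑ k ∈ Finset.range (j+1), |ε k| := by
    rw [show ((Finset.univ.filter fun n => x n ≤ r).card : ℝ) - r * M
        = (α 0 + (j:ℝ) * α 1 - r) * M + ∑ k ∈ Finset.range (j+1), ε k from by
      rw [hcount_total]; ring]
    refine (abs_add_le _ _).trans ?_
    rw [abs_mul, abs_of_pos hMpos]
    exact add_le_add le_rfl (Finset.abs_sum_le_sum_abs _ _)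
  have hsub : ∑ k ∈ Finset.range (j+1), |ε k| ≤ ∑ k ∈ Finset.range R, |ε k| :=
    Finset.sum_le_sum_of_subset_of_nonneg
      (Finset.range_subset_range.2 (by omega)) (fun _ _ _ => abs_nonneg _)
  have hmul : |α 0 + (j:ℝ) * α 1 - r| * M ≤ max (α 0 * M) ((M:ℝ) / R) := by
    calc |α 0 + (j:ℝ) * α 1 - r| * M ≤ max (α 0) (1 / (R:ℝ)) * M := by
          exact mul_le_mul_of_nonneg_right hkey hMpos.le
      _ = max (α 0 * M) ((M:ℝ) / R) := by
          rw [max_mul_of_nonneg _ _ hMpos.le]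
          congr 1
          ring
  calc |((Finset.univ.filter fun n => x n ≤ r).card : ℝ) - r * M|
      ≤ |α 0 + (j:ℝ) * α 1 - r| * M + ∑ k ∈ Finset.range (j+1), |ε k| := habs
    _ ≤ max (α 0 * M) ((M:ℝ) / R) + ∑ k ∈ Finset.range R, |ε k| :=
        add_le_add hmul hsub
    _ = C := rfl
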